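/- Let p be a prime number and R = Z_p[[T]] the formal power series ring over the p-adic integers Z_p. Let l ≥ 1, let f_1, …, f_l ∈ R be power series whose constant terms f_j(0) ∈ Z_p are all nonzero, let n_1, …, n_l be positive integers, and set E = ⊕_{j=1}^{l} R/(f_j^{n_j}). Suppose M is an R-module admitting an injective R-module homomorphism Φ : M → E whose cokernel is finite. Then the quotient M/TM is finite and its cardinality equals the cardinality of Z_p/cZ_p, where c = ∏_{j=1}^{l} f_j(0)^{n_j} ∈ Z_p. -/

import Mathlib

open PowerSeries DirectSum Pointwise

set_option maxHeartbeats 1000000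
set_option synthInstance.maxHeartbeats 400000

section PadicAux

variable {p : ℕ} [Fact p.Prime]

private lemma toZModPow_surj (k : ℕ) : Function.Surjective (PadicInt.toZModPow (p := p) k) := by
  intro z
  have : NeZero (p ^ k) := ⟨pow_ne_zero _ (Fact.out (p := p.Prime)).ne_zero⟩
  obtain ⟨m, rfl⟩ := ZMod.natCast_zmod_surjective (n := p ^ k) z
  exact ⟨(m : ℤ_[p]), map_natCast _ m⟩

private lemma quot_ppow_equiv (k : ℕ) :
    Nonempty ((ℤ_[p] ⧸ Ideal.span {(p : ℤ_[p]) ^ k}) ≃+* ZMod (p ^ k)) :=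
  ⟨(Ideal.quotEquivOfEq (PadicInt.ker_toZModPow k).symm).trans
    (RingHom.quotientKerEquivOfSurjective (toZModPow_surj k))⟩

private lemma span_eq_ppow {a : ℤ_[p]} (ha : a ≠ 0) :
    Ideal.span {a} = Ideal.span {(p : ℤ_[p]) ^ a.valuation} := by
  rw [Ideal.span_singleton_eq_span_singleton]
  exact (Associated.symm ⟨PadicInt.unitCoeff ha, by
    rw [mul_comm]; exact (PadicInt.unitCoeff_spec ha).symm⟩)

private lemma card_quot_eq {a : ℤ_[p]} (ha : a ≠ 0) :
    Nat.card (ℤ_[p] ⧸ Ideal.span {a}) = p ^ a.valuation := by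
  rw [span_eq_ppow ha]
  obtain ⟨e⟩ := quot_ppow_equiv (p := p) a.valuation
  rw [Nat.card_congr e.toEquiv, Nat.card_zmod]

private lemma val_mul {a b : ℤ_[p]} (ha : a ≠ 0) (hb : b ≠ 0) :
    (a * b).valuation = a.valuation + b.valuation := by
  exact PadicInt.valuation_mul ha hb

private lemma natAbs_val_mul {a b : ℤ_[p]} (ha : a ≠ 0) (hb : b ≠ 0) :
    (a * b).valuation = a.valuation + b.valuation := by
  exact val_mul ha hb

private lemma card_quot_mul {a b : ℤ_[p]} (ha : a ≠ 0) (hb : b ≠ 0) :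
    Nat.card (ℤ_[p] ⧸ Ideal.span {a * b})
      = Nat.card (ℤ_[p] ⧸ Ideal.span {a}) * Nat.card (ℤ_[p] ⧸ Ideal.span {b}) := by
  rw [card_quot_eq (mul_ne_zero ha hb), card_quot_eq ha, card_quot_eq hb,
    natAbs_val_mul ha hb, pow_add]

private lemma card_quot_prod {ι : Type*} (s : Finset ι) (a : ι → ℤ_[p])
    (ha : ∀ j ∈ s, a j ≠ 0) :
    Nat.card (ℤ_[p] ⧸ Ideal.span {∏ j ∈ s, a j})
      = ∏ j ∈ s, Nat.card (ℤ_[p] ⧸ Ideal.span {a j}) := by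
  induction s using Finset.cons_induction with
  | empty =>
      rw [Finset.prod_empty, Finset.prod_empty, Ideal.span_singleton_one]
      haveI : Subsingleton (ℤ_[p] ⧸ (⊤ : Ideal ℤ_[p])) :=
        Ideal.Quotient.subsingleton_iff.mpr rfl
      exact Nat.card_of_subsingleton 0
  | cons j s hj ih =>
      rw [Finset.prod_cons, Finset.prod_cons,
        card_quot_mul (ha j (Finset.mem_cons_self j s))
          (Finset.prod_ne_zero_iff.mpr fun i hi => ha i (Finset.mem_cons_of_mem hi)),
        ih fun i hi => ha i (Finset.mem_cons_of_mem hi)]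

private lemma card_quot_pos {a : ℤ_[p]} (ha : a ≠ 0) :
    0 < Nat.card (ℤ_[p] ⧸ Ideal.span {a}) := by
  rw [card_quot_eq ha]
  exact pow_pos (Fact.out (p := p.Prime)).pos _

end PadicAux

section PowerSeriesAux

variable {p : ℕ} [Fact p.Prime]

private lemma ker_cc : RingHom.ker (constantCoeff : ℤ_[p]⟦X⟧ →+* ℤ_[p]) = Ideal.span {(X : ℤ_[p]⟦X⟧)} := by
  ext φ
  rw [RingHom.mem_ker, Ideal.mem_span_singleton, X_dvd_iff]

private noncomputable def ccEquiv : (ℤ_[p]⟦X⟧ ⧸ Ideal.span {(X : ℤ_[p]⟦X⟧)}) ≃+* ℤ_[p] :=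
  (Ideal.quotEquivOfEq ker_cc.symm).trans
    (RingHom.quotientKerEquivOfSurjective (fun a => ⟨C a, constantCoeff_C a⟩))

private lemma ccEquiv_mk (h : ℤ_[p]⟦X⟧) :
    ccEquiv (Ideal.Quotient.mk _ h) = constantCoeff h := rfl

private lemma sup_span_eq (g : ℤ_[p]⟦X⟧) :
    Ideal.span {g} ⊔ Ideal.span {(X : ℤ_[p]⟦X⟧)}
      = Ideal.span {(X : ℤ_[p]⟦X⟧)} ⊔ Ideal.span {C (constantCoeff g)} := by
  have hXdvd : (X : ℤ_[p]⟦X⟧) ∣ (g - C (constantCoeff g)) := by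
    rw [X_dvd_iff]; simp
  apply le_antisymm
  · apply sup_le
    · rw [Ideal.span_singleton_le_iff_mem]
      have hmem : g - C (constantCoeff g) + C (constantCoeff g) ∈
          Ideal.span {(X : ℤ_[p]⟦X⟧)} ⊔ Ideal.span {C (constantCoeff g)} :=
        Ideal.add_mem _ (Ideal.mem_sup_left (Ideal.mem_span_singleton.mpr hXdvd))
          (Ideal.mem_sup_right (Ideal.subset_span rfl))
      simpa using hmem
    · exact le_sup_left
  · apply sup_le
    · exact le_sup_right
    · rw [Ideal.span_singleton_le_iff_mem]
      have hmem : g - (g - C (constantCoeff g)) ∈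
          Ideal.span {g} ⊔ Ideal.span {(X : ℤ_[p]⟦X⟧)} :=
        Ideal.sub_mem _ (Ideal.mem_sup_left (Ideal.subset_span rfl))
          (Ideal.mem_sup_right (Ideal.mem_span_singleton.mpr hXdvd))
      simpa using hmem

private lemma map_ccEquiv (a : ℤ_[p]) :
    Ideal.span {a} = Ideal.map (ccEquiv (p := p) : _ →+* ℤ_[p])
      (Ideal.map (Ideal.Quotient.mk (Ideal.span {(X : ℤ_[p]⟦X⟧)})) (Ideal.span {C a})) := by
  have key : ((ccEquiv (p := p) : _ →+* ℤ_[p]).comp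
      (Ideal.Quotient.mk (Ideal.span {(X : ℤ_[p]⟦X⟧)}))) (C a) = a := by
    show ccEquiv (Ideal.Quotient.mk _ (C a)) = a
    rw [ccEquiv_mk, constantCoeff_C]
  rw [Ideal.map_map, Ideal.map_span, Set.image_singleton, key]

private noncomputable def quotEquiv2 (a : ℤ_[p]) :
    ((ℤ_[p]⟦X⟧ ⧸ Ideal.span {(X : ℤ_[p]⟦X⟧)}) ⧸
        Ideal.map (Ideal.Quotient.mk (Ideal.span {(X : ℤ_[p]⟦X⟧)})) (Ideal.span {C a}))
      ≃+* ℤ_[p] ⧸ Ideal.span {a} :=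
  Ideal.quotientEquiv _ _ (ccEquiv (p := p)) (map_ccEquiv a)

private lemma card_component (g : ℤ_[p]⟦X⟧) :
    Nat.card ((ℤ_[p]⟦X⟧ ⧸ Ideal.span {g}) ⧸
        ((Ideal.span {(X : ℤ_[p]⟦X⟧)}) • (⊤ : Submodule ℤ_[p]⟦X⟧ (ℤ_[p]⟦X⟧ ⧸ Ideal.span {g}))))
      = Nat.card (ℤ_[p] ⧸ Ideal.span {constantCoeff g}) := by
  have h1 : (Ideal.span {(X : ℤ_[p]⟦X⟧)}) • (⊤ : Submodule ℤ_[p]⟦X⟧ (ℤ_[p]⟦X⟧ ⧸ Ideal.span {g}))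
      = Submodule.restrictScalars ℤ_[p]⟦X⟧
          (Ideal.map (algebraMap ℤ_[p]⟦X⟧ (ℤ_[p]⟦X⟧ ⧸ Ideal.span {g})) (Ideal.span {X})) :=
    Ideal.smul_top_eq_map _
  rw [h1]
  rw [Nat.card_congr (Submodule.Quotient.restrictScalarsEquiv ℤ_[p]⟦X⟧ _).toEquiv]
  rw [Ideal.Quotient.algebraMap_eq]
  rw [Nat.card_congr (DoubleQuot.quotQuotEquivQuotSup (Ideal.span {g}) (Ideal.span {X})).toEquiv]
  rw [sup_span_eq g]
  rw [Nat.card_congr (DoubleQuot.quotQuotEquivQuotSup (Ideal.span {X})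
    (Ideal.span {C (constantCoeff g)})).symm.toEquiv]
  exact Nat.card_congr (quotEquiv2 (constantCoeff g)).toEquiv

private lemma smul_top_pi {ι : Type*} [Fintype ι] [DecidableEq ι] {R : Type*} [CommRing R]
    (I : Ideal R) (Ms : ι → Type*) [∀ i, AddCommGroup (Ms i)] [∀ i, Module R (Ms i)] :
    I • (⊤ : Submodule R (Π i, Ms i))
      = Submodule.pi Set.univ (fun i => I • (⊤ : Submodule R (Ms i))) := by
  apply le_antisymm
  · rw [Submodule.smul_le]
    intro r hr m _
    rw [Submodule.mem_pi]
    intro i _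
    exact Submodule.smul_mem_smul hr trivial
  · intro x hx
    rw [Submodule.mem_pi] at hx
    have hx2 : x = ∑ i, Pi.single i (x i) := (Finset.univ_sum_single x).symm
    rw [hx2]
    apply Submodule.sum_mem
    intro i _
    have hmem : (LinearMap.single R Ms i) (x i)
        ∈ Submodule.map (LinearMap.single R Ms i) (I • ⊤) := ⟨_, hx i trivial, rfl⟩
    rw [Submodule.map_smul''] at hmem
    exact Submodule.smul_mono le_rfl le_top hmem

private lemma X_smul_inj {g : ℤ_[p]⟦X⟧} (hg : constantCoeff g ≠ 0)
    (q : ℤ_[p]⟦X⟧ ⧸ Ideal.span {g}) (hq : (X : ℤ_[p]⟦X⟧) • q = 0) : q = 0 := by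
  obtain ⟨h, rfl⟩ := Ideal.Quotient.mk_surjective q
  have hXh : (X : ℤ_[p]⟦X⟧) • (Ideal.Quotient.mk _ h : ℤ_[p]⟦X⟧ ⧸ Ideal.span {g})
      = Ideal.Quotient.mk _ (X * h) := by
    exact (Submodule.Quotient.mk_smul (Ideal.span {g}) X h).symm
  rw [hXh, Ideal.Quotient.eq_zero_iff_mem, Ideal.mem_span_singleton] at hq
  rw [Ideal.Quotient.eq_zero_iff_mem, Ideal.mem_span_singleton]
  obtain ⟨c, hc⟩ := hq
  have hc0 : constantCoeff c = 0 := by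
    have := congrArg constantCoeff hc
    simp only [map_mul, constantCoeff_X, zero_mul] at this
    exact (mul_eq_zero.mp this.symm).resolve_left hg
  obtain ⟨c', rfl⟩ := X_dvd_iff.mpr hc0
  refine ⟨c', mul_left_cancel₀ X_ne_zero ?_⟩
  rw [hc]; ring

end PowerSeriesAux

/-- Let `R = ℤ_p[[T]]`, let `f₁, …, f_l ∈ R` have nonzero constant terms,
`n₁, …, n_l ≥ 1`, and `E = ⊕ R/(f_j^{n_j})`. If `M` is an `R`-module admitting an injective
`R`-homomorphism into `E` with finite cokernel, then `M/TM` is finite of cardinality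
`#(ℤ_p / c·ℤ_p)` where `c = ∏ f_j(0)^{n_j}`. -/
theorem card_coinvariants_of_pseudo_iso (p : ℕ) [Fact p.Prime] (l : ℕ) (hl : 1 ≤ l)
    (f : Fin l → PowerSeries ℤ_[p])
    (hf : ∀ j, PowerSeries.constantCoeff (f j) ≠ 0)
    (n : Fin l → ℕ) (hn : ∀ j, 0 < n j)
    (M : Type*) [AddCommGroup M] [Module (PowerSeries ℤ_[p]) M]
    (Φ : M →ₗ[PowerSeries ℤ_[p]]
      (⨁ j : Fin l, PowerSeries ℤ_[p] ⧸ Ideal.span {f j ^ n j}))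
    (hΦ : Function.Injective Φ)
    (hcoker : Finite
      (@HasQuotient.Quotient _ _ (Submodule.hasQuotient
        (M := ⨁ j : Fin l, PowerSeries ℤ_[p] ⧸ Ideal.span {f j ^ n j})) (LinearMap.range Φ))) :
    Finite (M ⧸ ((Ideal.span {(PowerSeries.X : PowerSeries ℤ_[p])}) •
        (⊤ : Submodule (PowerSeries ℤ_[p]) M))) ∧
    Nat.card (M ⧸ ((Ideal.span {(PowerSeries.X : PowerSeries ℤ_[p])}) •
        (⊤ : Submodule (PowerSeries ℤ_[p]) M)))
      = Nat.card (ℤ_[p] ⧸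
          Ideal.span {∏ j : Fin l, (PowerSeries.constantCoeff (f j)) ^ n j}) := by
  classical
  set N : Submodule ℤ_[p]⟦X⟧ (⨁ j : Fin l, ℤ_[p]⟦X⟧ ⧸ Ideal.span {f j ^ n j}) := LinearMap.range Φ with hN
  letI : AddCommGroup ↥N :=
    @Submodule.addCommGroup ℤ_[p]⟦X⟧ (⨁ j : Fin l, ℤ_[p]⟦X⟧ ⧸ Ideal.span {f j ^ n j}) _ _ _ N
  set IX : Ideal ℤ_[p]⟦X⟧ := Ideal.span {X} with hIX
  set TEm : Submodule ℤ_[p]⟦X⟧ (⨁ j : Fin l, ℤ_[p]⟦X⟧ ⧸ Ideal.span {f j ^ n j}) := IX • ⊤ with hTEm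
  letI : AddCommGroup ↥TEm :=
    @Submodule.addCommGroup ℤ_[p]⟦X⟧ (⨁ j : Fin l, ℤ_[p]⟦X⟧ ⧸ Ideal.span {f j ^ n j}) _ _ _ TEm
  set TNm : Submodule ℤ_[p]⟦X⟧ (⨁ j : Fin l, ℤ_[p]⟦X⟧ ⧸ Ideal.span {f j ^ n j}) := IX • N with hTNm
  have hg0 : ∀ j, PowerSeries.constantCoeff (f j ^ n j) ≠ 0 := fun j => by
    rw [map_pow]; exact pow_ne_zero _ (hf j)
  -- X-multiplication is injective on E
  have hXinjE : ∀ e : (⨁ j : Fin l, ℤ_[p]⟦X⟧ ⧸ Ideal.span {f j ^ n j}), (X : ℤ_[p]⟦X⟧) • e = 0 → e = 0 := by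
    intro e he
    refine DFinsupp.ext fun j => ?_
    have hj : (X : ℤ_[p]⟦X⟧) • (e j) = 0 := by
      rw [← DFinsupp.smul_apply, he, DFinsupp.zero_apply]
    rw [DFinsupp.zero_apply]
    exact X_smul_inj (hg0 j) (e j) hj
  -- every element of TEm is an X-multiple
  have hTEmem : ∀ t ∈ TEm, ∃ x, (X : ℤ_[p]⟦X⟧) • x = t := by
    intro t ht
    rw [hTEm, hIX, Submodule.ideal_span_singleton_smul] at ht
    have ht' : t ∈ (X : ℤ_[p]⟦X⟧) • SetLike.coe (⊤ : Submodule ℤ_[p]⟦X⟧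
        (⨁ j : Fin l, ℤ_[p]⟦X⟧ ⧸ Ideal.span {f j ^ n j})) := by
      rw [← Submodule.coe_pointwise_smul]; exact ht
    obtain ⟨x, -, hx⟩ := Set.mem_smul_set.mp ht'
    exact ⟨x, hx⟩
  have hTNmem : ∀ t, t ∈ TNm ↔ ∃ x ∈ N, (X : ℤ_[p]⟦X⟧) • x = t := by
    intro t
    constructor
    · intro ht
      rw [hTNm, hIX, Submodule.ideal_span_singleton_smul] at ht
      have ht' : t ∈ (X : ℤ_[p]⟦X⟧) • SetLike.coe N := by
        rw [← Submodule.coe_pointwise_smul]; exact ht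
      exact Set.mem_smul_set.mp ht'
    · rintro ⟨x, hxN, rfl⟩
      exact Submodule.smul_mem_smul (Ideal.subset_span rfl) hxN
  -- relindex A : Nat.card (M / XM) = relindex of TNm in N
  have e1 : (M ⧸ (IX • (⊤ : Submodule ℤ_[p]⟦X⟧ M))) ≃ₗ[ℤ_[p]⟦X⟧]
      (↥N ⧸ (IX • (⊤ : Submodule ℤ_[p]⟦X⟧ ↥N))) :=
    Submodule.Quotient.equiv _ _ (LinearEquiv.ofInjective Φ hΦ) (by
      have h : Submodule.map ((LinearEquiv.ofInjective Φ hΦ :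
            M ≃ₗ[ℤ_[p]⟦X⟧] ↥N) : M →ₗ[ℤ_[p]⟦X⟧] ↥N) (IX • ⊤) = IX • ⊤ := by
        rw [Submodule.map_smul'', Submodule.map_top, LinearEquiv.range]
      exact h)
  have hEq : (IX • (⊤ : Submodule ℤ_[p]⟦X⟧ ↥N)) = Submodule.comap N.subtype TNm := by
    apply Submodule.map_injective_of_injective N.injective_subtype
    rw [Submodule.map_smul'', Submodule.map_top, Submodule.range_subtype,
      Submodule.map_comap_subtype, hTNm, inf_eq_right.mpr Submodule.smul_le_right]
  have hcardA : Nat.card (M ⧸ (IX • (⊤ : Submodule ℤ_[p]⟦X⟧ M)))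
      = TNm.toAddSubgroup.relIndex (Submodule.toAddSubgroup (R := ℤ_[p]⟦X⟧) (M := ⨁ j : Fin l, ℤ_[p]⟦X⟧ ⧸ Ideal.span {f j ^ n j}) N) := by
    rw [Nat.card_congr e1.toEquiv, Nat.card_congr (Submodule.quotEquivOfEq _ _ hEq).toEquiv]
    rfl
  -- relindex B : index of N = relindex of TNm in TEm
  have hXmemIX : (X : ℤ_[p]⟦X⟧) ∈ IX := Ideal.subset_span rfl
  set σ : (⨁ j : Fin l, ℤ_[p]⟦X⟧ ⧸ Ideal.span {f j ^ n j}) →ₗ[ℤ_[p]⟦X⟧] ↥TEm :=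
    LinearMap.codRestrict TEm ((LinearMap.lsmul ℤ_[p]⟦X⟧ _) (X : ℤ_[p]⟦X⟧))
      (fun x => Submodule.smul_mem_smul hXmemIX trivial) with hσ
  set ρ := (Submodule.comap TEm.subtype TNm).mkQ.comp σ with hρ
  have hρsurj : Function.Surjective ρ := by
    intro y
    obtain ⟨t, rfl⟩ := Submodule.Quotient.mk_surjective _ y
    obtain ⟨x, hx⟩ := hTEmem (t : (⨁ j : Fin l, ℤ_[p]⟦X⟧ ⧸ Ideal.span {f j ^ n j})) t.2
    refine ⟨x, ?_⟩
    rw [hρ, LinearMap.comp_apply, Submodule.mkQ_apply]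
    exact congrArg _ (Subtype.ext hx)
  have hker : LinearMap.ker ρ = N := by
    ext x
    rw [LinearMap.mem_ker, hρ, LinearMap.comp_apply, Submodule.mkQ_apply,
      Submodule.Quotient.mk_eq_zero, Submodule.mem_comap]
    constructor
    · intro hx
      have hx' : (X : ℤ_[p]⟦X⟧) • x ∈ TNm := hx
      obtain ⟨m, hmN, hm⟩ := (hTNmem _).mp hx'
      have : x = m := by
        have : (X : ℤ_[p]⟦X⟧) • (x - m) = 0 := by rw [smul_sub, hm, sub_self]
        have := hXinjE _ this
        rwa [sub_eq_zero] at this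
      rwa [this]
    · intro hx
      exact Submodule.smul_mem_smul hXmemIX hx
  have e2a := (@Submodule.quotEquivOfEq ℤ_[p]⟦X⟧ (⨁ j : Fin l, ℤ_[p]⟦X⟧ ⧸ Ideal.span {f j ^ n j}) _ _ _
    N (LinearMap.ker ρ) hker.symm)
  have e2b := (@LinearMap.quotKerEquivOfSurjective ℤ_[p]⟦X⟧ (⨁ j : Fin l, ℤ_[p]⟦X⟧ ⧸ Ideal.span {f j ^ n j})
    (↥TEm ⧸ Submodule.comap TEm.subtype TNm) _ _ _ _ _ ρ hρsurj)
  have e2 := e2a.trans e2b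
  have hcardB : (Submodule.toAddSubgroup (R := ℤ_[p]⟦X⟧) (M := ⨁ j : Fin l, ℤ_[p]⟦X⟧ ⧸ Ideal.span {f j ^ n j}) N).index = TNm.toAddSubgroup.relIndex (Submodule.toAddSubgroup (R := ℤ_[p]⟦X⟧) (M := ⨁ j : Fin l, ℤ_[p]⟦X⟧ ⧸ Ideal.span {f j ^ n j}) TEm) := by
    show Nat.card (@HasQuotient.Quotient _ _ (Submodule.hasQuotient (M := ⨁ j : Fin l, ℤ_[p]⟦X⟧ ⧸ Ideal.span {f j ^ n j})) N)
      = Nat.card (↥TEm ⧸ Submodule.comap TEm.subtype TNm)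
    exact Nat.card_congr e2.toEquiv
  -- computing the index of TEm
  have hTEcard : (Submodule.toAddSubgroup (R := ℤ_[p]⟦X⟧) (M := ⨁ j : Fin l, ℤ_[p]⟦X⟧ ⧸ Ideal.span {f j ^ n j}) TEm).index
      = Nat.card (ℤ_[p] ⧸
          Ideal.span {∏ j : Fin l, (PowerSeries.constantCoeff (f j)) ^ n j}) := by
    show Nat.card (@HasQuotient.Quotient _ _ (Submodule.hasQuotient (M := ⨁ j : Fin l, ℤ_[p]⟦X⟧ ⧸ Ideal.span {f j ^ n j})) TEm) = _
    have e3 : (@HasQuotient.Quotient _ _ (Submodule.hasQuotient (M := ⨁ j : Fin l, ℤ_[p]⟦X⟧ ⧸ Ideal.span {f j ^ n j})) TEm) ≃ₗ[ℤ_[p]⟦X⟧]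
        ((Π j : Fin l, ℤ_[p]⟦X⟧ ⧸ Ideal.span {f j ^ n j}) ⧸
          (IX • (⊤ : Submodule ℤ_[p]⟦X⟧ (Π j : Fin l, ℤ_[p]⟦X⟧ ⧸ Ideal.span {f j ^ n j})))) :=
      Submodule.Quotient.equiv _ _
        (DirectSum.linearEquivFunOnFintype ℤ_[p]⟦X⟧ (Fin l) (fun j => ℤ_[p]⟦X⟧ ⧸ Ideal.span {f j ^ n j}))
        (by
          have h : Submodule.map (DirectSum.linearEquivFunOnFintype ℤ_[p]⟦X⟧ (Fin l)
                (fun j => ℤ_[p]⟦X⟧ ⧸ Ideal.span {f j ^ n j})).toLinearMap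
              (IX • ⊤) = IX • ⊤ := by
            rw [Submodule.map_smul'', Submodule.map_top, LinearEquiv.range]
          rw [hTEm]
          exact h)
    rw [Nat.card_congr e3.toEquiv, smul_top_pi,
      Nat.card_congr (Submodule.quotientPi _).toEquiv, Nat.card_pi,
      card_quot_prod Finset.univ (fun j => (PowerSeries.constantCoeff (f j)) ^ n j)
        (fun j _ => pow_ne_zero _ (hf j))]
    refine Finset.prod_congr rfl (fun j _ => ?_)
    have := card_component (p := p) (f j ^ n j)
    rw [map_pow] at this
    exact this
  -- nonvanishing of the two indices
  have hNne : (Submodule.toAddSubgroup (R := ℤ_[p]⟦X⟧) (M := ⨁ j : Fin l, ℤ_[p]⟦X⟧ ⧸ Ideal.span {f j ^ n j}) N).index ≠ 0 := by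
    have : Nonempty (@HasQuotient.Quotient _ _ (Submodule.hasQuotient (M := ⨁ j : Fin l, ℤ_[p]⟦X⟧ ⧸ Ideal.span {f j ^ n j})) (LinearMap.range Φ)) :=
      ⟨Submodule.Quotient.mk 0⟩
    exact Nat.card_ne_zero.mpr ⟨this, hcoker⟩
  have hprodne : (∏ j : Fin l, (PowerSeries.constantCoeff (f j)) ^ n j) ≠ 0 :=
    Finset.prod_ne_zero_iff.mpr (fun j _ => pow_ne_zero _ (hf j))
  have hTEne : (Submodule.toAddSubgroup (R := ℤ_[p]⟦X⟧) (M := ⨁ j : Fin l, ℤ_[p]⟦X⟧ ⧸ Ideal.span {f j ^ n j}) TEm).index ≠ 0 := by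
    rw [hTEcard]
    exact (card_quot_pos hprodne).ne'
  -- index juggling
  have hle1 : TNm.toAddSubgroup ≤ (Submodule.toAddSubgroup (R := ℤ_[p]⟦X⟧) (M := ⨁ j : Fin l, ℤ_[p]⟦X⟧ ⧸ Ideal.span {f j ^ n j}) N) := fun x hx => Submodule.smul_le_right hx
  have hle2 : TNm.toAddSubgroup ≤ (Submodule.toAddSubgroup (R := ℤ_[p]⟦X⟧) (M := ⨁ j : Fin l, ℤ_[p]⟦X⟧ ⧸ Ideal.span {f j ^ n j}) TEm) := fun x hx =>
    Submodule.smul_mono le_rfl le_top hx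
  have h1 := AddSubgroup.relIndex_mul_index hle1
  have h2 := AddSubgroup.relIndex_mul_index hle2
  have hmain : TNm.toAddSubgroup.relIndex (Submodule.toAddSubgroup (R := ℤ_[p]⟦X⟧) (M := ⨁ j : Fin l, ℤ_[p]⟦X⟧ ⧸ Ideal.span {f j ^ n j}) N) = (Submodule.toAddSubgroup (R := ℤ_[p]⟦X⟧) (M := ⨁ j : Fin l, ℤ_[p]⟦X⟧ ⧸ Ideal.span {f j ^ n j}) TEm).index := by
    have heq : TNm.toAddSubgroup.relIndex (Submodule.toAddSubgroup (R := ℤ_[p]⟦X⟧) (M := ⨁ j : Fin l, ℤ_[p]⟦X⟧ ⧸ Ideal.span {f j ^ n j}) N) * (Submodule.toAddSubgroup (R := ℤ_[p]⟦X⟧) (M := ⨁ j : Fin l, ℤ_[p]⟦X⟧ ⧸ Ideal.span {f j ^ n j}) N).index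
        = (Submodule.toAddSubgroup (R := ℤ_[p]⟦X⟧) (M := ⨁ j : Fin l, ℤ_[p]⟦X⟧ ⧸ Ideal.span {f j ^ n j}) TEm).index * (Submodule.toAddSubgroup (R := ℤ_[p]⟦X⟧) (M := ⨁ j : Fin l, ℤ_[p]⟦X⟧ ⧸ Ideal.span {f j ^ n j}) N).index := by
      rw [h1, ← h2, ← hcardB, mul_comm]
    exact Nat.eq_of_mul_eq_mul_right (Nat.pos_of_ne_zero hNne) heq
  have hfinal : Nat.card (M ⧸ (IX • (⊤ : Submodule ℤ_[p]⟦X⟧ M)))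
      = Nat.card (ℤ_[p] ⧸
          Ideal.span {∏ j : Fin l, (PowerSeries.constantCoeff (f j)) ^ n j}) := by
    rw [hcardA, hmain, hTEcard]
  refine ⟨?_, hfinal⟩
  have hne : Nat.card (M ⧸ (IX • (⊤ : Submodule ℤ_[p]⟦X⟧ M))) ≠ 0 := by
    rw [hfinal]
    exact (card_quot_pos hprodne).ne'
  exact (Nat.card_ne_zero.mp hne).2
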